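/- Let (A_k)_{k=1,…,K} be a partition of Q into nonempty sets and suppose ν(C) = Σ_{k=1}^K ν_k(C ∩ A_k) for all C ⊆ Q, where each ν_k is a real-valued function on subsets of Q. For a permutation π and j ∈ Q set G_{π,j} = ½ · (ν(C_{π,j} ∪ {j}) − ν(C_{π,j}) + ν(C_{ρ(π),j} ∪ {j}) − ν(C_{ρ(π),j})). Then for all indices j ∈ A_k and l ∈ A_m belonging to different blocks (k ≠ m), the covariance under the uniform distribution on permutations vanishes: (1/q!) · Σ_π (G_{π,j} − φ_j)(G_{π,l} − φ_l) = 0, where φ_j, φ_l are the Shapley values of ν. -/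

import Mathlib

open Finset

/-- Shapley value of player `j` for value function `ν` on coalitions of `Fin q`. -/
noncomputable def shapley {q : ℕ} (ν : Finset (Fin q) → ℝ) (j : Fin q) : ℝ :=
  ((q : ℝ))⁻¹ * ∑ C ∈ (Finset.univ.erase j).powerset,
    (((q - 1).choose C.card : ℝ))⁻¹ * (ν (insert j C) - ν C)

/-- The coalition `C_{π,j}` of players preceding `j` in the permutation `π`,
where `π i` is the player at position `i`. -/
def preceding {q : ℕ} (π : Equiv.Perm (Fin q)) (j : Fin q) : Finset (Fin q) :=
  (Finset.univ.filter (fun i : Fin q => i < π.symm j)).image π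

/-- The reversed permutation `ρ(π) = (π_q, …, π_1)`. -/
def reversedPerm {q : ℕ} (π : Equiv.Perm (Fin q)) : Equiv.Perm (Fin q) :=
  Fin.revPerm.trans π

/-- Paired single-permutation PermutationSHAP estimate. -/
noncomputable def pairedEstimate {q : ℕ} (ν : Finset (Fin q) → ℝ)
    (π : Equiv.Perm (Fin q)) (j : Fin q) : ℝ :=
  (1 / 2 : ℝ) * (ν (insert j (preceding π j)) - ν (preceding π j)
    + ν (insert j (preceding (reversedPerm π) j)) - ν (preceding (reversedPerm π) j))

variable {q : ℕ}

lemma mem_preceding {π : Equiv.Perm (Fin q)} {j x : Fin q} :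
    x ∈ preceding π j ↔ π.symm x < π.symm j := by
  simp only [preceding, mem_image, mem_filter, mem_univ, true_and]
  constructor
  · rintro ⟨i, hi, rfl⟩; simpa using hi
  · intro h; exact ⟨π.symm x, h, by simp⟩

lemma preceding_eq_filter (π : Equiv.Perm (Fin q)) (j : Fin q) :
    preceding π j = univ.filter (fun x => π.symm x < π.symm j) := by
  ext x; simp [mem_preceding]

lemma not_mem_preceding (π : Equiv.Perm (Fin q)) (j : Fin q) : j ∉ preceding π j := by
  simp [mem_preceding]

lemma reversedPerm_symm_apply (π : Equiv.Perm (Fin q)) (x : Fin q) :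
    (reversedPerm π).symm x = (π.symm x).rev := by
  simp [reversedPerm]

lemma preceding_reversed (π : Equiv.Perm (Fin q)) (j : Fin q) :
    preceding (reversedPerm π) j = univ \ insert j (preceding π j) := by
  ext x
  simp only [mem_preceding, reversedPerm_symm_apply, mem_sdiff, mem_univ, true_and,
    mem_insert, not_or, Fin.rev_lt_rev]
  constructor
  · intro h
    exact ⟨fun hxj => by subst hxj; exact lt_irrefl _ h, lt_asymm h⟩
  · rintro ⟨h1, h2⟩
    have hne : π.symm j ≠ π.symm x := fun hc => h1 (by simpa using (π.symm.injective hc).symm)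
    exact lt_of_le_of_ne (not_lt.1 h2) hne

noncomputable def gAux {q : ℕ} (A : Finset (Fin q)) (w : Finset (Fin q) → ℝ)
    (j : Fin q) (S : Finset (Fin q)) : ℝ :=
  (1 / 2 : ℝ) * (w (insert j S) - w S
    + (w (insert j (A \ insert j S)) - w (A \ insert j S)))

variable {K : ℕ} {𝒜 : Fin K → Finset (Fin q)} {ν : Finset (Fin q) → ℝ}
  {νk : Fin K → Finset (Fin q) → ℝ}

lemma marginal_delta (hdisj : ∀ k l, k ≠ l → Disjoint (𝒜 k) (𝒜 l))
    (hν : ∀ C : Finset (Fin q), ν C = ∑ k, νk k (C ∩ 𝒜 k))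
    {k : Fin K} {j : Fin q} (hj : j ∈ 𝒜 k) {C : Finset (Fin q)} (hjC : j ∉ C) :
    ν (insert j C) - ν C = νk k (insert j (C ∩ 𝒜 k)) - νk k (C ∩ 𝒜 k) := by
  rw [hν, hν, ← Finset.sum_sub_distrib]
  rw [Fintype.sum_eq_single k]
  · rw [Finset.insert_inter_of_mem hj]
  · intro k' hk'
    have hjk' : j ∉ 𝒜 k' := fun h =>
      (Finset.disjoint_left.1 (hdisj k k' (fun hc => hk' hc.symm))) hj h
    rw [Finset.insert_inter_of_notMem hjk', sub_self]

lemma inter_sdiff_helper {P A : Finset (Fin q)} {j : Fin q} :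
    (univ \ insert j P) ∩ A = A \ insert j (P ∩ A) := by
  ext x
  simp only [mem_inter, mem_sdiff, mem_univ, true_and, mem_insert, not_or, mem_inter]
  tauto

lemma pairedEstimate_eq (hdisj : ∀ k l, k ≠ l → Disjoint (𝒜 k) (𝒜 l))
    (hν : ∀ C : Finset (Fin q), ν C = ∑ k, νk k (C ∩ 𝒜 k))
    {k : Fin K} {j : Fin q} (hj : j ∈ 𝒜 k) (π : Equiv.Perm (Fin q)) :
    pairedEstimate ν π j = gAux (𝒜 k) (νk k) j (preceding π j ∩ 𝒜 k) := by
  have h1 : j ∉ preceding π j := not_mem_preceding π j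
  have h2 : j ∉ preceding (reversedPerm π) j := not_mem_preceding _ j
  have e1 := marginal_delta hdisj hν hj h1
  have e2 := marginal_delta hdisj hν hj h2
  have h3 : preceding (reversedPerm π) j ∩ 𝒜 k = 𝒜 k \ insert j (preceding π j ∩ 𝒜 k) := by
    rw [preceding_reversed, inter_sdiff_helper]
  rw [pairedEstimate, gAux, ← h3]
  have : ν (insert j (preceding π j)) - ν (preceding π j)
      + ν (insert j (preceding (reversedPerm π) j)) - ν (preceding (reversedPerm π) j)
      = (ν (insert j (preceding π j)) - ν (preceding π j))
      + (ν (insert j (preceding (reversedPerm π) j)) - ν (preceding (reversedPerm π) j)) := by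
    ring
  rw [this, e1, e2]

/-! ### Order-swap machinery -/

section Swap

variable (B : Finset (Fin q))

def posF (π : Equiv.Perm (Fin q)) : Finset (Fin q) := B.image π.symm

lemma mem_posF {π : Equiv.Perm (Fin q)} {x : Fin q} : x ∈ posF B π ↔ π x ∈ B := by
  simp only [posF, mem_image]
  constructor
  · rintro ⟨y, hy, rfl⟩; simpa using hy
  · intro h; exact ⟨π x, h, by simp⟩

lemma card_posF (π : Equiv.Perm (Fin q)) : (posF B π).card = B.card :=
  Finset.card_image_of_injective _ π.symm.injective

noncomputable def fF (π : Equiv.Perm (Fin q)) : Fin B.card ≃ {x : Fin q // x ∈ B} :=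
  ((posF B π).orderIsoOfFin (card_posF B π)).toEquiv.trans
    ((π : Fin q ≃ Fin q).subtypeEquiv (fun _ => mem_posF B))

lemma fF_apply_coe (π : Equiv.Perm (Fin q)) (r : Fin B.card) :
    (fF B π r : Fin q) = π ((posF B π).orderIsoOfFin (card_posF B π) r) := rfl

lemma symm_fF (π : Equiv.Perm (Fin q)) (r : Fin B.card) :
    π.symm (fF B π r : Fin q) = ((posF B π).orderIsoOfFin (card_posF B π) r : Fin q) := by
  rw [fF_apply_coe]; simp

lemma fF_symm_lt_iff (π : Equiv.Perm (Fin q)) {i l : Fin q} (hi : i ∈ B) (hl : l ∈ B) :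
    (fF B π).symm ⟨i, hi⟩ < (fF B π).symm ⟨l, hl⟩ ↔ π.symm i < π.symm l := by
  set o := (posF B π).orderIsoOfFin (card_posF B π)
  have hmem : ∀ x : Fin q, x ∈ B → π.symm x ∈ posF B π := by
    intro x hx; rw [mem_posF]; simpa using hx
  have happ : ∀ (x : Fin q) (hx : x ∈ B),
      (fF B π).symm ⟨x, hx⟩ = o.symm ⟨π.symm x, hmem x hx⟩ := by
    intro x hx
    apply (fF B π).injective
    simp only [Equiv.apply_symm_apply]
    apply Subtype.ext
    rw [fF_apply_coe]
    simp [o]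
  rw [happ i hi, happ l hl]
  rw [← o.lt_iff_lt]
  simp only [OrderIso.apply_symm_apply]
  exact Iff.rfl

noncomputable def chatF (π τ : Equiv.Perm (Fin q)) : Equiv.Perm (Fin q) :=
  Equiv.Perm.subtypeCongr ((fF B π).symm.trans (fF B τ)) (Equiv.refl _)

lemma chatF_apply_mem {π τ : Equiv.Perm (Fin q)} {x : Fin q} (h : x ∈ B) :
    chatF B π τ x = (fF B τ ((fF B π).symm ⟨x, h⟩) : Fin q) :=
  Equiv.Perm.subtypeCongr.left_apply _ _ h

lemma chatF_apply_not_mem {π τ : Equiv.Perm (Fin q)} {x : Fin q} (h : x ∉ B) :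
    chatF B π τ x = x :=
  Equiv.Perm.subtypeCongr.right_apply _ _ h

lemma chatF_symm (π τ : Equiv.Perm (Fin q)) : (chatF B π τ).symm = chatF B τ π := by
  rw [chatF, Equiv.Perm.subtypeCongr.symm]
  congr 1

lemma chatF_mem_iff {π τ : Equiv.Perm (Fin q)} {x : Fin q} : chatF B π τ x ∈ B ↔ x ∈ B := by
  by_cases h : x ∈ B
  · simp only [h, iff_true, chatF_apply_mem B h]
    exact (fF B τ _).2
  · simp only [h, iff_false, chatF_apply_not_mem B h]

lemma posF_trans_chat (π τ : Equiv.Perm (Fin q)) :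
    posF B (π.trans (chatF B π τ)) = posF B π := by
  ext x
  rw [mem_posF, mem_posF]
  exact (chatF_mem_iff B).trans Iff.rfl

lemma orderIsoOfFin_congr {s t : Finset (Fin q)} (hst : s = t) {n : ℕ} (hs : s.card = n)
    (ht : t.card = n) (r : Fin n) :
    (s.orderIsoOfFin hs r : Fin q) = (t.orderIsoOfFin ht r : Fin q) := by
  subst hst; rfl

lemma fF_trans_chat (π τ : Equiv.Perm (Fin q)) :
    fF B (π.trans (chatF B π τ)) = fF B τ := by
  apply Equiv.ext
  intro r
  apply Subtype.ext
  rw [fF_apply_coe]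
  have hpos := posF_trans_chat B π τ
  rw [orderIsoOfFin_congr hpos (card_posF B _) (card_posF B π)]
  show chatF B π τ (π ((posF B π).orderIsoOfFin (card_posF B π) r)) = _
  have : π ((posF B π).orderIsoOfFin (card_posF B π) r) = (fF B π r : Fin q) := rfl
  rw [this, chatF_apply_mem B (fF B π r).2]
  congr 1
  rw [Subtype.coe_eta, Equiv.symm_apply_apply]

lemma chatF_congr {π τ π' τ' : Equiv.Perm (Fin q)} (h1 : fF B π = fF B π')
    (h2 : fF B τ = fF B τ') : chatF B π τ = chatF B π' τ' := by
  rw [chatF, chatF, h1, h2]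

end Swap

section Swap2

variable (B : Finset (Fin q))

lemma trans_chat_symm_applyB {π τ : Equiv.Perm (Fin q)} {x : Fin q} (hx : x ∈ B) :
    (π.trans (chatF B π τ)).symm x
      = ((posF B π).orderIsoOfFin (card_posF B π) ((fF B τ).symm ⟨x, hx⟩) : Fin q) := by
  have : (π.trans (chatF B π τ)).symm x = π.symm ((chatF B π τ).symm x) := rfl
  rw [this, chatF_symm, chatF_apply_mem B hx, symm_fF]

lemma preceding_trans_chat_inter (π τ : Equiv.Perm (Fin q)) {l : Fin q} (hl : l ∈ B) :
    preceding (π.trans (chatF B π τ)) l ∩ B = preceding τ l ∩ B := by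
  ext x
  simp only [mem_inter, mem_preceding, and_congr_left_iff]
  intro hx
  rw [trans_chat_symm_applyB B hx, trans_chat_symm_applyB B hl]
  rw [Subtype.coe_lt_coe, OrderIso.lt_iff_lt, fF_symm_lt_iff]

lemma preceding_trans_chat_inter_other (π τ : Equiv.Perm (Fin q)) {A : Finset (Fin q)}
    (hAB : Disjoint A B) {j : Fin q} (hj : j ∈ A) :
    preceding (π.trans (chatF B π τ)) j ∩ A = preceding π j ∩ A := by
  have hsymm : ∀ x : Fin q, x ∉ B → (π.trans (chatF B π τ)).symm x = π.symm x := by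
    intro x hx
    have : (π.trans (chatF B π τ)).symm x = π.symm ((chatF B π τ).symm x) := rfl
    rw [this, chatF_symm, chatF_apply_not_mem B hx]
  ext x
  simp only [mem_inter, mem_preceding, and_congr_left_iff]
  intro hx
  rw [hsymm x (Finset.disjoint_left.1 hAB hx), hsymm j (Finset.disjoint_left.1 hAB hj)]

noncomputable def swapPair (x : Equiv.Perm (Fin q) × Equiv.Perm (Fin q)) :
    Equiv.Perm (Fin q) × Equiv.Perm (Fin q) :=
  (x.1.trans (chatF B x.1 x.2), x.2.trans (chatF B x.2 x.1))

lemma swapPair_involution (x : Equiv.Perm (Fin q) × Equiv.Perm (Fin q)) :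
    swapPair B (swapPair B x) = x := by
  obtain ⟨π, τ⟩ := x
  have h1 : fF B (π.trans (chatF B π τ)) = fF B τ := fF_trans_chat B π τ
  have h2 : fF B (τ.trans (chatF B τ π)) = fF B π := fF_trans_chat B τ π
  have c1 : chatF B (π.trans (chatF B π τ)) (τ.trans (chatF B τ π)) = chatF B τ π :=
    chatF_congr B h1 h2
  have c2 : chatF B (τ.trans (chatF B τ π)) (π.trans (chatF B π τ)) = chatF B π τ :=
    chatF_congr B h2 h1
  simp only [swapPair, c1, c2]
  refine Prod.ext ?_ ?_
  · apply Equiv.ext; intro i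
    simp only [Equiv.trans_apply]
    rw [← chatF_symm B π τ, Equiv.symm_apply_apply]
  · apply Equiv.ext; intro i
    simp only [Equiv.trans_apply]
    rw [← chatF_symm B τ π, Equiv.symm_apply_apply]

end Swap2

lemma factor_lemma {A B : Finset (Fin q)} (hAB : Disjoint A B) {j l : Fin q}
    (hj : j ∈ A) (hl : l ∈ B) (F₀ H₀ : Finset (Fin q) → ℝ) :
    (∑ π : Equiv.Perm (Fin q), F₀ (preceding π j ∩ A)) *
      (∑ π : Equiv.Perm (Fin q), H₀ (preceding π l ∩ B))
      = (Nat.factorial q : ℝ) *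
        ∑ π : Equiv.Perm (Fin q), F₀ (preceding π j ∩ A) * H₀ (preceding π l ∩ B) := by
  classical
  rw [Finset.sum_mul_sum]
  have key : ∀ x : Equiv.Perm (Fin q) × Equiv.Perm (Fin q),
      F₀ (preceding (swapPair B x).1 j ∩ A) * H₀ (preceding (swapPair B x).2 l ∩ B)
      = F₀ (preceding x.1 j ∩ A) * H₀ (preceding x.1 l ∩ B) := by
    rintro ⟨π, τ⟩
    simp only [swapPair]
    rw [preceding_trans_chat_inter_other B π τ hAB hj,
      preceding_trans_chat_inter B τ π hl]
  calc ∑ π : Equiv.Perm (Fin q), ∑ τ : Equiv.Perm (Fin q),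
        F₀ (preceding π j ∩ A) * H₀ (preceding τ l ∩ B)
      = ∑ x : Equiv.Perm (Fin q) × Equiv.Perm (Fin q),
          F₀ (preceding x.1 j ∩ A) * H₀ (preceding x.2 l ∩ B) := by
        exact (Fintype.sum_prod_type
          (f := fun x : Equiv.Perm (Fin q) × Equiv.Perm (Fin q) =>
            F₀ (preceding x.1 j ∩ A) * H₀ (preceding x.2 l ∩ B))).symm
    _ = ∑ x : Equiv.Perm (Fin q) × Equiv.Perm (Fin q),
          F₀ (preceding (swapPair B x).1 j ∩ A) * H₀ (preceding (swapPair B x).2 l ∩ B) :=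
        (Equiv.sum_comp (Function.Involutive.toPerm (swapPair B) (swapPair_involution B))
          (fun x => F₀ (preceding x.1 j ∩ A) * H₀ (preceding x.2 l ∩ B))).symm
    _ = ∑ x : Equiv.Perm (Fin q) × Equiv.Perm (Fin q),
          F₀ (preceding x.1 j ∩ A) * H₀ (preceding x.1 l ∩ B) := by
        apply Finset.sum_congr rfl
        intro x _
        exact key x
    _ = ∑ π : Equiv.Perm (Fin q), ∑ _τ : Equiv.Perm (Fin q),
          F₀ (preceding π j ∩ A) * H₀ (preceding π l ∩ B) :=
        Fintype.sum_prod_type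
          (f := fun x : Equiv.Perm (Fin q) × Equiv.Perm (Fin q) =>
            F₀ (preceding x.1 j ∩ A) * H₀ (preceding x.1 l ∩ B))
    _ = (Nat.factorial q : ℝ) *
          ∑ π : Equiv.Perm (Fin q), F₀ (preceding π j ∩ A) * H₀ (preceding π l ∩ B) := by
        simp only [Finset.sum_const, card_univ, Fintype.card_perm, Fintype.card_fin,
          nsmul_eq_mul]
        rw [← Finset.mul_sum]

/-! ### Fiber counting -/

lemma card_filter_symm_lt (π : Equiv.Perm (Fin q)) (t : Fin q) :
    (univ.filter fun x => π.symm x < t).card = (t : ℕ) := by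
  rw [← Fin.card_Iio (b := t)]
  apply Finset.card_nbij' (i := fun x => π.symm x) (j := fun y => π y)
  · intro a ha; simp only [Finset.mem_coe, mem_filter, mem_univ, true_and] at ha; simpa [Finset.mem_Iio]
  · intro a ha; simp only [Finset.mem_coe, Finset.mem_Iio] at ha; simp [ha]
  · intro a _; simp
  · intro a _; simp

lemma card_preceding (π : Equiv.Perm (Fin q)) (j : Fin q) :
    (preceding π j).card = (π.symm j : ℕ) := by
  rw [preceding_eq_filter, card_filter_symm_lt]

lemma symm_apply_of_preceding_eq {π : Equiv.Perm (Fin q)} {j : Fin q} {C : Finset (Fin q)}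
    (h : preceding π j = C) : (π.symm j : ℕ) = C.card := by
  rw [← h, card_preceding]

section Fiber

variable {j : Fin q} {C : Finset (Fin q)}

lemma filter_lt_eq_Iio (t : Fin q) : (univ.filter fun i : Fin q => i < t) = Finset.Iio t := by
  ext x; simp

lemma card_subtype_lt (t : Fin q) : Fintype.card {i : Fin q // i < t} = (t : ℕ) := by
  rw [Fintype.card_subtype, filter_lt_eq_Iio, Fin.card_Iio]

def cFin (hC : C ⊆ univ.erase j) : Fin q :=
  ⟨C.card, lt_of_le_of_lt (Finset.card_le_card hC)
    (by rw [Finset.card_erase_of_mem (mem_univ j), card_univ, Fintype.card_fin]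
        exact Nat.sub_lt (Fin.pos j) one_pos)⟩

lemma not_mem_C (hC : C ⊆ univ.erase j) : j ∉ C := fun h => by
  simpa using (hC h)

lemma mem_D {x : Fin q} : x ∈ univ \ insert j C ↔ x ≠ j ∧ x ∉ C := by
  simp [mem_sdiff, not_or]

variable {π : Equiv.Perm (Fin q)}

lemma symm_j_eq (hC : C ⊆ univ.erase j) (h : preceding π j = C) : π.symm j = cFin hC :=
  Fin.ext (symm_apply_of_preceding_eq h)

lemma mem_C_iff (hC : C ⊆ univ.erase j) (h : preceding π j = C) (x : Fin q) :
    x ∈ C ↔ π.symm x < cFin hC := by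
  rw [← symm_j_eq hC h, ← h, mem_preceding]

lemma mem_D_iff (hC : C ⊆ univ.erase j) (h : preceding π j = C) (x : Fin q) :
    x ∈ univ \ insert j C ↔ cFin hC < π.symm x := by
  have hJ : x = j ↔ π.symm x = cFin hC := by
    rw [← symm_j_eq hC h]
    exact ⟨fun hx => by rw [hx], fun hx => π.symm.injective hx⟩
  rw [mem_D]
  constructor
  · rintro ⟨h1, h2⟩
    have hle : cFin hC ≤ π.symm x := not_lt.1 (fun hlt => h2 ((mem_C_iff hC h x).2 hlt))
    exact lt_of_le_of_ne hle (fun he => h1 (hJ.2 he.symm))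
  · intro h1
    exact ⟨fun he => absurd (hJ.1 he) (ne_of_gt h1),
      fun hc => absurd ((mem_C_iff hC h x).1 hc) (not_lt.2 (le_of_lt h1))⟩

def eLeft (hC : C ⊆ univ.erase j) (h : preceding π j = C) :
    {i : Fin q // i < cFin hC} ≃ {x : Fin q // x ∈ C} where
  toFun := fun i => ⟨π i, (mem_C_iff hC h _).2 (by simpa using i.2)⟩
  invFun := fun x => ⟨π.symm x, (mem_C_iff hC h _).1 x.2⟩
  left_inv := fun i => by apply Subtype.ext; simp
  right_inv := fun x => by apply Subtype.ext; simp

def eRight (hC : C ⊆ univ.erase j) (h : preceding π j = C) :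
    {i : Fin q // cFin hC < i} ≃ {x : Fin q // x ∈ univ \ insert j C} where
  toFun := fun i => ⟨π i, (mem_D_iff hC h _).2 (by simpa using i.2)⟩
  invFun := fun x => ⟨π.symm x, (mem_D_iff hC h _).1 x.2⟩
  left_inv := fun i => by apply Subtype.ext; simp
  right_inv := fun x => by apply Subtype.ext; simp

def midFun (hC : C ⊆ univ.erase j)
    (e₂ : {i : Fin q // cFin hC < i} ≃ {x : Fin q // x ∈ univ \ insert j C}) :
    {i : Fin q // ¬ i < cFin hC} → {x : Fin q // ¬ x ∈ C} := fun i =>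
  if h' : cFin hC < (i : Fin q) then ⟨e₂ ⟨i, h'⟩, (mem_D.1 (e₂ ⟨i, h'⟩).2).2⟩
  else ⟨j, not_mem_C hC⟩

lemma midFun_injective (hC : C ⊆ univ.erase j)
    (e₂ : {i : Fin q // cFin hC < i} ≃ {x : Fin q // x ∈ univ \ insert j C}) :
    Function.Injective (midFun hC e₂) := by
  rintro ⟨a, ha⟩ ⟨b, hb⟩ hab
  apply Subtype.ext
  simp only [midFun] at hab
  by_cases h1 : cFin hC < a <;> by_cases h2 : cFin hC < b
  · rw [dif_pos h1, dif_pos h2] at hab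
    rw [Subtype.mk.injEq] at hab
    have he : e₂ ⟨a, h1⟩ = e₂ ⟨b, h2⟩ := Subtype.ext hab
    simpa using congrArg (fun z => (e₂.symm z : Fin q)) he
  · rw [dif_pos h1, dif_neg h2] at hab
    rw [Subtype.mk.injEq] at hab
    exact absurd hab (mem_D.1 (e₂ ⟨a, h1⟩).2).1
  · rw [dif_neg h1, dif_pos h2] at hab
    rw [Subtype.mk.injEq] at hab
    exact absurd hab.symm (mem_D.1 (e₂ ⟨b, h2⟩).2).1
  · have ha' : a = cFin hC := le_antisymm (not_lt.1 h1) (not_lt.1 ha)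
    have hb' : b = cFin hC := le_antisymm (not_lt.1 h2) (not_lt.1 hb)
    show a = b
    rw [ha', hb']

lemma card_not_lt_eq (hC : C ⊆ univ.erase j) :
    Fintype.card {i : Fin q // ¬ i < cFin hC} = Fintype.card {x : Fin q // ¬ x ∈ C} := by
  rw [Fintype.card_subtype_compl, Fintype.card_subtype_compl, card_subtype_lt]
  have h1 : Fintype.card {x : Fin q // x ∈ C} = C.card := Fintype.card_coe C
  rw [h1]
  rfl

noncomputable def midEquiv (hC : C ⊆ univ.erase j)
    (e₂ : {i : Fin q // cFin hC < i} ≃ {x : Fin q // x ∈ univ \ insert j C}) :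
    {i : Fin q // ¬ i < cFin hC} ≃ {x : Fin q // ¬ x ∈ C} :=
  Equiv.ofBijective (midFun hC e₂)
    ((Fintype.bijective_iff_injective_and_card _).2
      ⟨midFun_injective hC e₂, card_not_lt_eq hC⟩)

lemma midEquiv_apply (hC : C ⊆ univ.erase j) (e₂) (i) :
    (midEquiv hC e₂ i : Fin q) = (midFun hC e₂ i : Fin q) := rfl

end Fiber

section Fiber2

variable {j : Fin q} {C : Finset (Fin q)}

noncomputable def glueP (hC : C ⊆ univ.erase j)
    (e₁ : {i : Fin q // i < cFin hC} ≃ {x : Fin q // x ∈ C})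
    (e₂ : {i : Fin q // cFin hC < i} ≃ {x : Fin q // x ∈ univ \ insert j C}) :
    Equiv.Perm (Fin q) :=
  Equiv.subtypeCongr e₁ (midEquiv hC e₂)

lemma glueP_apply_lt (hC : C ⊆ univ.erase j) (e₁) (e₂) {i : Fin q} (hi : i < cFin hC) :
    glueP hC e₁ e₂ i = (e₁ ⟨i, hi⟩ : Fin q) := by
  show (Equiv.sumCompl (· ∈ C)) (Sum.map (⇑e₁) (⇑(midEquiv hC e₂))
    ((Equiv.sumCompl (· < cFin hC)).symm i)) = _
  rw [Equiv.sumCompl_symm_apply_of_pos (p := fun x : Fin q => x < cFin hC) hi]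
  rfl

lemma glueP_apply_not_lt (hC : C ⊆ univ.erase j) (e₁) (e₂) {i : Fin q}
    (hi : ¬ i < cFin hC) :
    glueP hC e₁ e₂ i = (midFun hC e₂ ⟨i, hi⟩ : Fin q) := by
  show (Equiv.sumCompl (· ∈ C)) (Sum.map (⇑e₁) (⇑(midEquiv hC e₂))
    ((Equiv.sumCompl (· < cFin hC)).symm i)) = _
  rw [Equiv.sumCompl_symm_apply_of_neg (p := fun x : Fin q => x < cFin hC) hi]
  rfl

lemma glueP_apply_gt (hC : C ⊆ univ.erase j) (e₁) (e₂) {i : Fin q} (hi : cFin hC < i) :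
    glueP hC e₁ e₂ i = (e₂ ⟨i, hi⟩ : Fin q) := by
  rw [glueP_apply_not_lt hC e₁ e₂ (asymm hi)]
  simp only [midFun, dif_pos hi]

lemma glueP_apply_cFin (hC : C ⊆ univ.erase j) (e₁) (e₂) :
    glueP hC e₁ e₂ (cFin hC) = j := by
  rw [glueP_apply_not_lt hC e₁ e₂ (lt_irrefl _)]
  simp only [midFun, dif_neg (lt_irrefl _)]

lemma glueP_mem_C (hC : C ⊆ univ.erase j) (e₁) (e₂) (i : Fin q) :
    glueP hC e₁ e₂ i ∈ C ↔ i < cFin hC := by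
  rcases lt_trichotomy i (cFin hC) with h | h | h
  · simp only [h, iff_true, glueP_apply_lt hC e₁ e₂ h]
    exact (e₁ ⟨i, h⟩).2
  · rw [h, glueP_apply_cFin]
    simp only [iff_false, lt_irrefl]
    exact not_mem_C hC
  · rw [glueP_apply_gt hC e₁ e₂ h]
    simp only [iff_false, not_lt.2 (le_of_lt h)]
    exact fun hc => absurd hc (mem_D.1 (e₂ ⟨i, h⟩).2).2

end Fiber2

section Fiber3

variable {j : Fin q} {C : Finset (Fin q)}

lemma fintype_card_irrel {α : Type*} {i1 i2 : Fintype α} :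
    @Fintype.card α i1 = @Fintype.card α i2 := by
  congr 1
  exact Subsingleton.elim _ _

lemma prec_glueP (hC : C ⊆ univ.erase j) (e₁) (e₂) :
    preceding (glueP hC e₁ e₂) j = C := by
  have hsymmj : (glueP hC e₁ e₂).symm j = cFin hC := by
    rw [Equiv.symm_apply_eq]
    exact (glueP_apply_cFin hC e₁ e₂).symm
  ext x
  rw [mem_preceding, hsymmj]
  have hmem := glueP_mem_C hC e₁ e₂ ((glueP hC e₁ e₂).symm x)
  rw [Equiv.apply_symm_apply] at hmem
  exact (Iff.symm hmem)

noncomputable def fiberEquiv (hC : C ⊆ univ.erase j) :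
    {π : Equiv.Perm (Fin q) // preceding π j = C} ≃
      (({i : Fin q // i < cFin hC} ≃ {x : Fin q // x ∈ C}) ×
        ({i : Fin q // cFin hC < i} ≃ {x : Fin q // x ∈ univ \ insert j C})) where
  toFun := fun p => (eLeft hC p.2, eRight hC p.2)
  invFun := fun e => ⟨glueP hC e.1 e.2, prec_glueP hC e.1 e.2⟩
  left_inv := fun p => by
    obtain ⟨π, h⟩ := p
    apply Subtype.ext
    apply Equiv.ext
    intro i
    show glueP hC (eLeft hC h) (eRight hC h) i = π i
    rcases lt_trichotomy i (cFin hC) with h1 | h1 | h1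
    · rw [glueP_apply_lt hC _ _ h1]; rfl
    · rw [h1, glueP_apply_cFin]
      have h2 := symm_j_eq hC h
      rw [← h2, Equiv.apply_symm_apply]
    · rw [glueP_apply_gt hC _ _ h1]; rfl
  right_inv := fun e => by
    obtain ⟨e₁, e₂⟩ := e
    refine Prod.ext ?_ ?_
    · apply Equiv.ext; intro i; apply Subtype.ext
      show glueP hC e₁ e₂ i = (e₁ i : Fin q)
      rw [glueP_apply_lt hC e₁ e₂ i.2, Subtype.coe_eta]
    · apply Equiv.ext; intro i; apply Subtype.ext
      show glueP hC e₁ e₂ i = (e₂ i : Fin q)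
      rw [glueP_apply_gt hC e₁ e₂ i.2, Subtype.coe_eta]

lemma fiber_card (hC : C ⊆ univ.erase j) :
    (univ.filter fun π : Equiv.Perm (Fin q) => preceding π j = C).card
      = (Nat.factorial C.card) * Nat.factorial (q - 1 - C.card) := by
  rw [← Fintype.card_subtype]
  have hc1 : Fintype.card {i : Fin q // i < cFin hC} = C.card := by
    rw [Fintype.card_of_subtype (Finset.Iio (cFin hC)) (fun x => by simp), Fin.card_Iio]
    rfl
  have hc2 : Fintype.card {x : Fin q // x ∈ C} = C.card :=
    Fintype.card_of_subtype C (fun _ => Iff.rfl)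
  have hc3 : Fintype.card {i : Fin q // cFin hC < i} = q - 1 - C.card := by
    rw [Fintype.card_of_subtype (Finset.Ioi (cFin hC)) (fun x => by simp), Fin.card_Ioi]
    rfl
  have hc4 : @Fintype.card {x : Fin q // x ∈ univ \ insert j C}
      (Finset.Subtype.fintype (univ \ insert j C)) = q - 1 - C.card := by
    refine (Fintype.card_of_subtype (univ \ insert j C) (fun _ => Iff.rfl)).trans ?_
    rw [Finset.card_sdiff_of_subset (subset_univ _), card_univ, Fintype.card_fin,
      Finset.card_insert_of_notMem (not_mem_C hC), Nat.sub_sub, Nat.add_comm]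
  have E2 : {π : Equiv.Perm (Fin q) // preceding π j = C} ≃
      ((Fin C.card ≃ Fin C.card) × (Fin (q - 1 - C.card) ≃ Fin (q - 1 - C.card))) :=
    (fiberEquiv hC).trans (Equiv.prodCongr
      (Equiv.equivCongr (Fintype.equivFinOfCardEq hc1) (Fintype.equivFinOfCardEq hc2))
      (Equiv.equivCongr (Fintype.equivFinOfCardEq hc3) (Fintype.equivFinOfCardEq hc4)))
  rw [Fintype.card_congr E2, Fintype.card_prod,
    Fintype.card_equiv (Equiv.refl (Fin C.card)),
    Fintype.card_equiv (Equiv.refl (Fin (q - 1 - C.card))),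
    Fintype.card_fin, Fintype.card_fin]

end Fiber3

/-! ### Unbiasedness -/

lemma preceding_mem_powerset (π : Equiv.Perm (Fin q)) (j : Fin q) :
    preceding π j ∈ (univ.erase j : Finset (Fin q)).powerset := by
  rw [mem_powerset]
  intro x hx
  rw [mem_preceding] at hx
  exact mem_erase.2 ⟨fun h => by subst h; exact lt_irrefl _ hx, mem_univ x⟩

lemma sum_preceding (f : Finset (Fin q) → ℝ) (j : Fin q) :
    ∑ π : Equiv.Perm (Fin q), f (preceding π j)
      = ∑ C ∈ (univ.erase j : Finset (Fin q)).powerset,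
          ((Nat.factorial C.card) * Nat.factorial (q - 1 - C.card)) • f C := by
  rw [← Finset.sum_fiberwise_of_maps_to (g := fun π : Equiv.Perm (Fin q) => preceding π j)
    (fun π _ => preceding_mem_powerset π j) (fun π => f (preceding π j))]
  apply Finset.sum_congr rfl
  intro C hC
  rw [Finset.sum_congr rfl (fun π hπ => by rw [(Finset.mem_filter.1 hπ).2])]
  rw [Finset.sum_const, fiber_card (mem_powerset.1 hC)]

lemma weight_eq (hq : 1 ≤ q) {c : ℕ} (hc : c ≤ q - 1) :
    ((Nat.factorial c * Nat.factorial (q - 1 - c) : ℕ) : ℝ)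
      = (q.factorial : ℝ) * ((q : ℝ))⁻¹ * (((q - 1).choose c : ℝ))⁻¹ := by
  have hch : (q - 1).choose c * (Nat.factorial c * Nat.factorial (q - 1 - c))
      = Nat.factorial (q - 1) := by
    rw [← Nat.mul_assoc]
    exact Nat.choose_mul_factorial_mul_factorial hc
  have hqf : q * Nat.factorial (q - 1) = Nat.factorial q := by
    have := Nat.mul_factorial_pred (n := q) (by omega)
    simpa using this
  have hch0 : ((q - 1).choose c : ℝ) ≠ 0 := Nat.cast_ne_zero.2 (Nat.choose_pos hc).ne'
  have hq0 : (q : ℝ) ≠ 0 := Nat.cast_ne_zero.2 (by omega)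
  have hBig : Nat.factorial c * Nat.factorial (q - 1 - c) * (q * (q - 1).choose c)
      = Nat.factorial q := by
    calc Nat.factorial c * Nat.factorial (q - 1 - c) * (q * (q - 1).choose c)
        = q * ((q - 1).choose c * (Nat.factorial c * Nat.factorial (q - 1 - c))) := by ring
      _ = q * Nat.factorial (q - 1) := by rw [hch]
      _ = Nat.factorial q := hqf
  field_simp
  exact_mod_cast (by rw [← hBig]; ring :
    Nat.factorial c * Nat.factorial (q - 1 - c) * q * (q - 1).choose c = Nat.factorial q)

lemma card_le_of_mem_powerset {j : Fin q} {C : Finset (Fin q)}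
    (hC : C ∈ (univ.erase j : Finset (Fin q)).powerset) : C.card ≤ q - 1 := by
  have := Finset.card_le_card (mem_powerset.1 hC)
  rwa [Finset.card_erase_of_mem (mem_univ j), card_univ, Fintype.card_fin] at this

lemma sum_single_estimate (hq : 1 ≤ q) (ν : Finset (Fin q) → ℝ) (j : Fin q) :
    ∑ π : Equiv.Perm (Fin q), (ν (insert j (preceding π j)) - ν (preceding π j))
      = (q.factorial : ℝ) * shapley ν j := by
  rw [sum_preceding (fun C => ν (insert j C) - ν C) j, shapley, ← mul_assoc, Finset.mul_sum]
  apply Finset.sum_congr rfl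
  intro C hC
  rw [nsmul_eq_mul, weight_eq hq (card_le_of_mem_powerset hC), mul_assoc]

lemma reversedPerm_involutive : Function.Involutive (reversedPerm (q := q)) := by
  intro π
  apply Equiv.ext
  intro i
  simp [reversedPerm, Fin.rev_rev]

lemma sum_paired (hq : 1 ≤ q) (ν : Finset (Fin q) → ℝ) (j : Fin q) :
    ∑ π : Equiv.Perm (Fin q), pairedEstimate ν π j = (q.factorial : ℝ) * shapley ν j := by
  have hthis : ∀ π : Equiv.Perm (Fin q), pairedEstimate ν π j
      = (1 / 2 : ℝ) * ((ν (insert j (preceding π j)) - ν (preceding π j))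
        + (ν (insert j (preceding (reversedPerm π) j)) - ν (preceding (reversedPerm π) j))) := by
    intro π; rw [pairedEstimate]; ring
  rw [Finset.sum_congr rfl (fun π _ => hthis π), ← Finset.mul_sum, Finset.sum_add_distrib]
  have hrev : ∑ π : Equiv.Perm (Fin q),
      (ν (insert j (preceding (reversedPerm π) j)) - ν (preceding (reversedPerm π) j))
      = ∑ π : Equiv.Perm (Fin q), (ν (insert j (preceding π j)) - ν (preceding π j)) :=
    Equiv.sum_comp (Function.Involutive.toPerm _ reversedPerm_involutive)
      (fun π => ν (insert j (preceding π j)) - ν (preceding π j))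
  rw [hrev, sum_single_estimate hq ν j]
  ring

/-- under the additive decomposition, paired estimates of players
from different blocks are uncorrelated under the uniform distribution on
permutations. -/
theorem paired_permutationSHAP_block_uncorrelated (q K : ℕ) (hq : 1 ≤ q)
    (𝒜 : Fin K → Finset (Fin q))
    (hne : ∀ k, (𝒜 k).Nonempty)
    (hdisj : ∀ k l, k ≠ l → Disjoint (𝒜 k) (𝒜 l))
    (hcover : Finset.univ.biUnion 𝒜 = (Finset.univ : Finset (Fin q)))
    (ν : Finset (Fin q) → ℝ) (νk : Fin K → Finset (Fin q) → ℝ)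
    (hν : ∀ C : Finset (Fin q), ν C = ∑ k, νk k (C ∩ 𝒜 k))
    (k m : Fin K) (hkm : k ≠ m) (j l : Fin q)
    (hj : j ∈ 𝒜 k) (hl : l ∈ 𝒜 m) :
    ((Nat.factorial q : ℝ))⁻¹ *
        ∑ π : Equiv.Perm (Fin q),
          (pairedEstimate ν π j - shapley ν j)
            * (pairedEstimate ν π l - shapley ν l)
      = 0 := by
  have hAB : Disjoint (𝒜 k) (𝒜 m) := hdisj k m hkm
  have hsum0 : ∑ π : Equiv.Perm (Fin q),
      ((fun S => gAux (𝒜 k) (νk k) j S - shapley ν j) (preceding π j ∩ 𝒜 k)) = 0 := by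
    have : ∀ π : Equiv.Perm (Fin q),
        (fun S => gAux (𝒜 k) (νk k) j S - shapley ν j) (preceding π j ∩ 𝒜 k)
          = pairedEstimate ν π j - shapley ν j := fun π => by
      show gAux (𝒜 k) (νk k) j (preceding π j ∩ 𝒜 k) - shapley ν j
          = pairedEstimate ν π j - shapley ν j
      rw [pairedEstimate_eq hdisj hν hj π]
    rw [Finset.sum_congr rfl (fun π _ => this π), Finset.sum_sub_distrib,
      sum_paired hq ν j, Finset.sum_const, card_univ, Fintype.card_perm,
      Fintype.card_fin, nsmul_eq_mul, mul_comm, sub_self]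
  have hfact := factor_lemma hAB hj hl
    (fun S => gAux (𝒜 k) (νk k) j S - shapley ν j)
    (fun S => gAux (𝒜 m) (νk m) l S - shapley ν l)
  rw [hsum0, zero_mul] at hfact
  have hmain : ∑ π : Equiv.Perm (Fin q),
      (pairedEstimate ν π j - shapley ν j) * (pairedEstimate ν π l - shapley ν l)
      = ∑ π : Equiv.Perm (Fin q),
        ((fun S => gAux (𝒜 k) (νk k) j S - shapley ν j) (preceding π j ∩ 𝒜 k))
          * ((fun S => gAux (𝒜 m) (νk m) l S - shapley ν l) (preceding π l ∩ 𝒜 m)) := by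
    apply Finset.sum_congr rfl
    intro π _
    rw [pairedEstimate_eq hdisj hν hj π, pairedEstimate_eq hdisj hν hl π]
  have hfq : (q.factorial : ℝ) ≠ 0 := Nat.cast_ne_zero.2 (Nat.factorial_ne_zero q)
  rw [hmain]
  have hz : ∑ π : Equiv.Perm (Fin q),
      ((fun S => gAux (𝒜 k) (νk k) j S - shapley ν j) (preceding π j ∩ 𝒜 k))
        * ((fun S => gAux (𝒜 m) (νk m) l S - shapley ν l) (preceding π l ∩ 𝒜 m)) = 0 :=
    (mul_eq_zero.1 hfact.symm).resolve_left hfq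
  rw [hz, mul_zero]
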